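/- Let λ be a k-empty partition and r a large integer, with d = (r+k) mod e and c the number of beads on runner d. For an integer β define β° = ⌊(β - d - (c-1)e)/e⌋ if β ≥ d + (c-1)e, and β° = 0 otherwise. Then 𝔏_k(λ) = Σ_{β ∈ 𝔅_r(λ)} β°. -/

import Mathlib

open scoped BigOperators

def IsPartition (f : ℕ → ℕ) : Prop :=
  (∀ ⦃i j : ℕ⦄, i ≤ j → f j ≤ f i) ∧ ∃ N : ℕ, ∀ i, N ≤ i → f i = 0

noncomputable def conj (f : ℕ → ℕ) (i : ℕ) : ℕ := Nat.card {j : ℕ // i + 1 ≤ f j}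

def betaSet (f : ℕ → ℕ) (r : ℕ) : Multiset ℕ :=
  (Multiset.range r).map fun i => f i + (r - 1 - i)

/-- e-extension of a multiset: z gets multiplicity |B ∩ {z, z+e, z+2e, …}|. -/
def eExt (e : ℕ) (B : Multiset ℕ) : Multiset ℕ :=
  B.bind fun b => (Multiset.range (b / e + 1)).map fun j => b - j * e

def runnerCount (e d : ℕ) (B : Multiset ℕ) : ℕ :=
  Multiset.card (B.filter fun b => b % e = d)

/-- Beta-multiset of the e-core: slide all beads up their runners. -/
def coreBeta (e : ℕ) (B : Multiset ℕ) : Multiset ℕ :=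
  (Multiset.range e).bind fun j =>
    (Multiset.range (runnerCount e j B)).map fun i => j + i * e

/-- Weight multiset 𝔚: records the start of each single-step slide; equivalently
determined by 𝔛 = 𝔛(core) ⊔ 𝔚. -/
def weightMS (e : ℕ) (B : Multiset ℕ) : Multiset ℕ :=
  eExt e B - eExt e (coreBeta e B)

def eWeight (e : ℕ) (B : Multiset ℕ) : ℕ := Multiset.card (weightMS e B)

def DomMS (I J : Multiset ℕ) : Prop := Multiset.Rel (fun a b => b ≤ a) I J

/-- refined dominance order: same e-core and 𝔛^e_r(g) ⪰ 𝔛^e_r(f). -/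
def Dominates (e r : ℕ) (g f : ℕ → ℕ) : Prop :=
  coreBeta e (betaSet g r) = coreBeta e (betaSet f r) ∧
    DomMS (eExt e (betaSet g r)) (eExt e (betaSet f r))
/-- k-empty: all beads on runner d = (r+k) mod e are as high as possible. -/
def KEmpty (e k r : ℕ) (f : ℕ → ℕ) : Prop :=
  ∀ b ∈ betaSet f r, b % e = (r + k) % e →
    b < (r + k) % e + runnerCount e ((r + k) % e) (betaSet f r) * e

/-- 𝔏_k(λ): number of elements (with multiplicity) of 𝔛^e_r(λ) greater than d + c·e. -/
def Lk (e k r : ℕ) (f : ℕ → ℕ) : ℕ :=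
  Multiset.card <| (eExt e (betaSet f r)).filter fun x =>
    (r + k) % e + runnerCount e ((r + k) % e) (betaSet f r) * e < x

/-- 𝔏_k(λ) = Σ_{β ∈ 𝔅_r(λ)} β°, where β° = ⌊(β - d - (c-1)e)/e⌋ for
β ≥ d + (c-1)e and β° = 0 otherwise. -/
lemma my_countP_bind {α β : Type*} (p : β → Prop) [DecidablePred p] (s : Multiset α)
    (g : α → Multiset β) :
    Multiset.countP p (s.bind g) = (s.map fun a => Multiset.countP p (g a)).sum := by
  induction s using Multiset.induction_on with
  | empty => simp
  | cons a s ih => simp [Multiset.cons_bind, ih]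

lemma my_range_countP (m n : ℕ) :
    Multiset.countP (fun j => j < m) (Multiset.range n) = min m n := by
  induction n with
  | zero => simp
  | succ n ih =>
    rw [Multiset.range_succ, Multiset.countP_cons, ih]
    by_cases h : n < m <;> simp [h] <;> omega

lemma chain_count (e T b : ℕ) (he : 0 < e) (hmod : b % e = T % e → b < T) :
    ((Multiset.countP (fun x => T < x)
        ((Multiset.range (b / e + 1)).map fun j => b - j * e) : ℕ) : ℤ) =
      if (T : ℤ) - e ≤ (b : ℤ) then ((b : ℤ) - T + e) / e else 0 := by
  rw [Multiset.countP_map, ← Multiset.countP_eq_card_filter]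
  have hcond : ∀ j : ℕ, (T < b - j * e) ↔ j < (b - T + e - 1) / e := by
    intro j
    have h2 : j < (b - T + e - 1) / e ↔ (j + 1) * e ≤ b - T + e - 1 := by
      rw [Nat.lt_iff_add_one_le, Nat.le_div_iff_mul_le he]
    rw [h2, add_mul, one_mul]
    generalize j * e = t
    omega
  simp only [hcond]
  rw [my_range_countP]
  have hm : (b - T + e - 1) / e ≤ b / e + 1 := by
    have h1 : (b - T + e - 1) / e ≤ (b + e) / e := Nat.div_le_div_right (by omega)
    rwa [Nat.add_div_right _ he] at h1
  rw [min_eq_left hm]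
  by_cases hTb : T ≤ b
  · have hne : b % e ≠ T % e := fun h => absurd (hmod h) (by omega)
    have hnd : ¬ e ∣ (b - T + e) := by
      rintro ⟨q, hq⟩
      apply hne
      have hb' : b = T + e * (q - 1) := by
        rcases q with _ | q
        · omega
        · simp only [Nat.mul_succ] at hq
          simp only [Nat.add_sub_cancel]
          omega
      rw [hb', Nat.add_mul_mod_self_left]
    have hdiv : (b - T + e) / e = (b - T + e - 1) / e := by
      have h1 : b - T + e - 1 + 1 = b - T + e := by omega
      have := @Nat.succ_div (b - T + e - 1) e
      rw [h1] at this
      rw [this, if_neg hnd]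
      omega
    rw [if_pos (by push_cast; omega)]
    have hcast : (b : ℤ) - T + e = ((b - T + e : ℕ) : ℤ) := by push_cast; omega
    rw [hcast, ← Int.natCast_div, hdiv]
  · have hm0 : (b - T + e - 1) / e = 0 := by
      apply Nat.div_eq_of_lt; omega
    rw [hm0]
    split_ifs with h
    · rw [eq_comm]
      apply Int.ediv_eq_zero_of_lt
      · omega
      · push_cast; omega
    · rfl

theorem stmt10 (e k r : ℕ) (he : 2 ≤ e) (hk : k < e) (f : ℕ → ℕ)
    (hf : IsPartition f) (hr : conj f 0 ≤ r) (hke : KEmpty e k r f) :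
    (Lk e k r f : ℤ) =
      ((betaSet f r).map fun b =>
        if ((r + k) % e : ℤ) + ((runnerCount e ((r + k) % e) (betaSet f r) : ℤ) - 1) * e
            ≤ (b : ℤ) then
          ((b : ℤ) - ((r + k) % e : ℤ)
            - ((runnerCount e ((r + k) % e) (betaSet f r) : ℤ) - 1) * e) / e
        else 0).sum := by
  classical
  have he0 : 0 < e := by omega
  set d := (r + k) % e with hd
  set B := betaSet f r with hB
  set c := runnerCount e d B with hc
  have hdlt : d < e := Nat.mod_lt _ he0
  rw [Lk, ← Multiset.countP_eq_card_filter, eExt, my_countP_bind, Nat.cast_multiset_sum,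
    Multiset.map_map]
  simp only [bind_pure_comp, Functor.map, Multiset.map_map]
  refine congrArg Multiset.sum (Multiset.map_congr rfl ?_)
  intro b hb
  have hmod : b % e = (d + c * e) % e → b < d + c * e := by
    intro h
    have h2 : b % e = d := by
      rwa [Nat.add_mul_mod_self_right, Nat.mod_eq_of_lt hdlt] at h
    exact hke b hb h2
  have hcc := chain_count e (d + c * e) b he0 hmod
  simp only [Function.comp_apply] at hcc ⊢
  rw [hcc]
  have hdc : ((d : ℕ) : ℤ) = ((r : ℤ) + (k : ℤ)) % (e : ℤ) := by
    rw [hd]; push_cast; ring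
  rw [← hdc]
  have h1 : ((d + c * e : ℕ) : ℤ) = (d : ℤ) + (c : ℤ) * (e : ℤ) := by push_cast; ring
  rw [h1]
  have hce : ((c : ℤ) - 1) * (e : ℤ) = (c : ℤ) * e - e := by ring
  refine if_congr ⟨fun h => by linarith, fun h => by linarith⟩ ?_ rfl
  rw [show ((b : ℤ) - ((d : ℤ) + (c : ℤ) * e) + e) = (b : ℤ) - d - ((c : ℤ) - 1) * e from by
    ring]
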